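/- Fix g > 0. For a state with fluid depth h > 0 and real parameters u, v, a, b, α, β, γ, η, let U = (h, hu, hv, ha, hb, hα, hβ, hγ, hη) ∈ ℝ⁹, and define the flux map G : {U ∈ ℝ⁹ : U₁ > 0} → ℝ⁹, in conservative variables, whose value at this state is ( hv, huv + (1/3)hαβ − hab − (1/3)hγη, hv² + (1/3)hβ² + (g/2)h² − hb² − (1/3)hη², hav + (1/3)hβγ − hbu − (1/3)hαη, 0, huβ + hvα − haη − hbγ, 2hvβ − 2hbη, haβ + hvγ − hbα − huη, 0 ). Let Q(U) be the 9×9 real matrix whose only nonzero entries are: column 5 given by rows 2–9 as ( −(a−γ), −(b−η), −(u−α), −(v−β), −2γ, −2η, −2α, −2β ), column 7 given by rows 6–9 as ( u, v, a, b ), and column 9 given by rows 6–9 as ( −a, −b, −u, −v ). Let J(U) = DG(U) − Q(U), where DG(U) is the Jacobian matrix of G at U. Then the five real numbers v − β, v − b + (β−η)/√3, v − b − (β−η)/√3, v + b + (β+η)/√3, and v + b − (β+η)/√3 are eigenvalues of J(U), i.e., roots of its characteristic polynomial. -/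
import Mathlib


open Polynomial

/-- The flux of the first-order (M = 1) 1-D magnetic rotating shallow water
moment system in the conservative variables
`V = (h, hu, hv, ha, hb, hα, hβ, hγ, hη)` (0-indexed). -/
noncomputable def mrswme1Flux (g : ℝ) (V : Fin 9 → ℝ) : Fin 9 → ℝ :=
  ![V 2,
    V 1 * V 2 / V 0 + 1 / 3 * (V 5 * V 6 / V 0)
      - V 3 * V 4 / V 0 - 1 / 3 * (V 7 * V 8 / V 0),
    (V 2) ^ 2 / V 0 + 1 / 3 * ((V 6) ^ 2 / V 0) + g / 2 * (V 0) ^ 2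
      - (V 4) ^ 2 / V 0 - 1 / 3 * ((V 8) ^ 2 / V 0),
    V 3 * V 2 / V 0 + 1 / 3 * (V 6 * V 7 / V 0)
      - V 4 * V 1 / V 0 - 1 / 3 * (V 5 * V 8 / V 0),
    0,
    V 1 * V 6 / V 0 + V 2 * V 5 / V 0 - V 3 * V 8 / V 0 - V 4 * V 7 / V 0,
    2 * (V 2 * V 6 / V 0) - 2 * (V 4 * V 8 / V 0),
    V 3 * V 6 / V 0 + V 2 * V 7 / V 0 - V 4 * V 5 / V 0 - V 1 * V 8 / V 0,
    0]

/-- The Jacobian matrix `DG(U)` of the flux at `U`. -/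
noncomputable def mrswme1FluxJacobian (g : ℝ) (U : Fin 9 → ℝ) :
    Matrix (Fin 9) (Fin 9) ℝ :=
  Matrix.of fun i j =>
    deriv (fun s : ℝ => mrswme1Flux g (Function.update U j s) i) (U j)

/-- The nonconservative (Godunov–Powell) matrix `Q(U)` of the first-order
MRSW moment system, with nonzero entries only in columns 5, 7 and 9
(1-indexed). -/
noncomputable def mrswme1GP (u v a b α β γ η : ℝ) :
    Matrix (Fin 9) (Fin 9) ℝ :=
  Matrix.of fun i j =>
    if j = (4 : Fin 9) then
      ![0, -(a - γ), -(b - η), -(u - α), -(v - β),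
        -(2 * γ), -(2 * η), -(2 * α), -(2 * β)] i
    else if j = (6 : Fin 9) then
      ![0, 0, 0, 0, 0, u, v, a, b] i
    else if j = (8 : Fin 9) then
      ![0, 0, 0, 0, 0, -a, -b, -u, -v] i
    else 0


section MrswmeAux

open Matrix

variable {R : Type*}

lemma mrswme_v9_0 (x0 x1 x2 x3 x4 x5 x6 x7 x8 : R) : ![x0,x1,x2,x3,x4,x5,x6,x7,x8] (0:Fin 9) = x0 := rfl
lemma mrswme_v9_1 (x0 x1 x2 x3 x4 x5 x6 x7 x8 : R) : ![x0,x1,x2,x3,x4,x5,x6,x7,x8] (1:Fin 9) = x1 := rfl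
lemma mrswme_v9_2 (x0 x1 x2 x3 x4 x5 x6 x7 x8 : R) : ![x0,x1,x2,x3,x4,x5,x6,x7,x8] (2:Fin 9) = x2 := rfl
lemma mrswme_v9_3 (x0 x1 x2 x3 x4 x5 x6 x7 x8 : R) : ![x0,x1,x2,x3,x4,x5,x6,x7,x8] (3:Fin 9) = x3 := rfl
lemma mrswme_v9_4 (x0 x1 x2 x3 x4 x5 x6 x7 x8 : R) : ![x0,x1,x2,x3,x4,x5,x6,x7,x8] (4:Fin 9) = x4 := rfl
lemma mrswme_v9_5 (x0 x1 x2 x3 x4 x5 x6 x7 x8 : R) : ![x0,x1,x2,x3,x4,x5,x6,x7,x8] (5:Fin 9) = x5 := rfl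
lemma mrswme_v9_6 (x0 x1 x2 x3 x4 x5 x6 x7 x8 : R) : ![x0,x1,x2,x3,x4,x5,x6,x7,x8] (6:Fin 9) = x6 := rfl
lemma mrswme_v9_7 (x0 x1 x2 x3 x4 x5 x6 x7 x8 : R) : ![x0,x1,x2,x3,x4,x5,x6,x7,x8] (7:Fin 9) = x7 := rfl
lemma mrswme_v9_8 (x0 x1 x2 x3 x4 x5 x6 x7 x8 : R) : ![x0,x1,x2,x3,x4,x5,x6,x7,x8] (8:Fin 9) = x8 := rfl

lemma mrswme_sum9 [AddCommMonoid R] (f : Fin 9 → R) :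
    (∑ j, f j) = f 0 + f 1 + f 2 + f 3 + f 4 + f 5 + f 6 + f 7 + f 8 := by
  simp [Fin.sum_univ_succ, show Fin.succ 2 = (3:Fin 9) from rfl,
    show (Fin.succ 2).succ = (4:Fin 9) from rfl,
    show (Fin.succ 2).succ.succ = (5:Fin 9) from rfl,
    show (Fin.succ 2).succ.succ.succ = (6:Fin 9) from rfl,
    show (Fin.succ 2).succ.succ.succ.succ = (7:Fin 9) from rfl,
    show (Fin.succ 2).succ.succ.succ.succ.succ = (8:Fin 9) from rfl]
  abel

lemma mrswme_deriv_cmul (c x : ℝ) : deriv (fun s : ℝ => c * s) x = c := by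
  simpa using ((hasDerivAt_id x).const_mul c).deriv

lemma mrswme_deriv_mulc (c x : ℝ) : deriv (fun s : ℝ => s * c) x = c := by
  simpa using ((hasDerivAt_id x).mul_const c).deriv

lemma mrswme_eval_charpoly {n : Type*} [Fintype n] [DecidableEq n]
    [CommRing R] (M : Matrix n n R) (x : R) :
    M.charpoly.eval x = (x • (1 : Matrix n n R) - M).det := by
  rw [Matrix.charpoly, Polynomial.eval, ← Polynomial.coe_eval₂RingHom, RingHom.map_det]
  congr 1
  ext i j
  by_cases hij : i = j <;>
    simp [hij, Matrix.charmatrix_apply, Matrix.one_apply, Matrix.diagonal_apply,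
      Polynomial.eval₂RingHom, Polynomial.eval]

lemma mrswme_isRoot_of_mulVec {n : Type*} [Fintype n] [DecidableEq n]
    (M : Matrix n n ℝ) (x : ℝ) (w : n → ℝ) (hw : w ≠ 0)
    (h : (x • (1 : Matrix n n ℝ) - M).mulVec w = 0) :
    M.charpoly.IsRoot x := by
  rw [Polynomial.IsRoot.def, mrswme_eval_charpoly]
  exact Matrix.exists_mulVec_eq_zero_iff.mp ⟨w, hw, h⟩

lemma mrswme_isRoot_of_vecMul {n : Type*} [Fintype n] [DecidableEq n]
    (M : Matrix n n ℝ) (x : ℝ) (w : n → ℝ) (hw : w ≠ 0)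
    (h : Matrix.vecMul w (x • (1 : Matrix n n ℝ) - M) = 0) :
    M.charpoly.IsRoot x := by
  rw [Polynomial.IsRoot.def, mrswme_eval_charpoly]
  exact Matrix.exists_vecMul_eq_zero_iff.mp ⟨w, hw, h⟩

end MrswmeAux

lemma mrswme1_root_first (g h u v a b α β γ η : ℝ) (hh : h ≠ 0) :
    (Matrix.charpoly
        (mrswme1FluxJacobian g ![h, h * u, h * v, h * a, h * b, h * α, h * β, h * γ, h * η] - mrswme1GP u v a b α β γ η)).IsRoot (v - β) := by
  apply mrswme_isRoot_of_vecMul _ _ ![0,0,0,0,1,0,0,0,0]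
  · intro hw
    have := congrFun hw 4
    norm_num [mrswme_v9_4] at this
  · funext j
    have hflux4 : ∀ W : Fin 9 → ℝ, mrswme1Flux g W (4 : Fin 9) = 0 := fun _ => rfl
    simp only [Matrix.vecMul, dotProduct, mrswme_sum9,
      mrswme_v9_0, mrswme_v9_1, mrswme_v9_2, mrswme_v9_3, mrswme_v9_4,
      mrswme_v9_5, mrswme_v9_6, mrswme_v9_7, mrswme_v9_8,
      zero_mul, one_mul, add_zero, zero_add,
      Matrix.sub_apply, Matrix.smul_apply, Matrix.one_apply, smul_eq_mul,
      mrswme1FluxJacobian, mrswme1GP, Matrix.of_apply, hflux4, deriv_const',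
      Pi.zero_apply]
    fin_cases j <;> simp <;> ring


set_option maxHeartbeats 2000000 in
lemma mrswme1_root_aux (g h u v a b α β γ η ε τ : ℝ) (hh : h ≠ 0)
    (hε : ε * ε = 1) (hτ : τ * τ = 3) :
    (Matrix.charpoly
        (mrswme1FluxJacobian g ![h, h * u, h * v, h * a, h * b, h * α, h * β, h * γ, h * η] - mrswme1GP u v a b α β γ η)).IsRoot
      (v - ε * b + τ * (β - ε * η) / 3) := by
  apply mrswme_isRoot_of_mulVec _ _ ![0,1,0,ε,0,τ,0,ε*τ,0]
  · intro hw
    have := congrFun hw 1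
    norm_num [mrswme_v9_1] at this
  · have hcan : ∀ x : ℝ, h * x / h = x := fun x => mul_div_cancel_left₀ x hh
    have hupd1 : ∀ s : ℝ,
        Function.update ![h, h*u, h*v, h*a, h*b, h*α, h*β, h*γ, h*η] (1:Fin 9) s
          = ![h, s, h*v, h*a, h*b, h*α, h*β, h*γ, h*η] := by
      intro s; ext k; fin_cases k <;> rfl
    have hupd3 : ∀ s : ℝ,
        Function.update ![h, h*u, h*v, h*a, h*b, h*α, h*β, h*γ, h*η] (3:Fin 9) s
          = ![h, h*u, h*v, s, h*b, h*α, h*β, h*γ, h*η] := by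
      intro s; ext k; fin_cases k <;> rfl
    have hupd5 : ∀ s : ℝ,
        Function.update ![h, h*u, h*v, h*a, h*b, h*α, h*β, h*γ, h*η] (5:Fin 9) s
          = ![h, h*u, h*v, h*a, h*b, s, h*β, h*γ, h*η] := by
      intro s; ext k; fin_cases k <;> rfl
    have hupd7 : ∀ s : ℝ,
        Function.update ![h, h*u, h*v, h*a, h*b, h*α, h*β, h*γ, h*η] (7:Fin 9) s
          = ![h, h*u, h*v, h*a, h*b, h*α, h*β, s, h*η] := by
      intro s; ext k; fin_cases k <;> rfl
    have r0 : (((v - ε * b + τ * (β - ε * η) / 3) • (1 : Matrix (Fin 9) (Fin 9) ℝ) -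
        (mrswme1FluxJacobian g ![h, h * u, h * v, h * a, h * b, h * α, h * β, h * γ, h * η] - mrswme1GP u v a b α β γ η)).mulVec ![0,1,0,ε,0,τ,0,ε*τ,0]) (0:Fin 9) = 0 := by
      simp only [Matrix.mulVec, dotProduct, mrswme_sum9,
        mrswme_v9_0, mrswme_v9_1, mrswme_v9_2, mrswme_v9_3, mrswme_v9_4,
        mrswme_v9_5, mrswme_v9_6, mrswme_v9_7, mrswme_v9_8,
        mul_zero, mul_one, add_zero, zero_add, one_mul,
        Matrix.sub_apply, Matrix.smul_apply, Matrix.one_apply, smul_eq_mul,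
        mrswme1FluxJacobian, mrswme1GP, Matrix.of_apply,
        hupd1, hupd3, hupd5, hupd7, mrswme1Flux,
        deriv_add_const, deriv_const_add, deriv_sub_const, deriv_const_sub,
        deriv_div_const, deriv_mul_const_field, deriv_const_mul_field,
        deriv_id'', deriv_const', Pi.zero_apply, hcan,
        mrswme_deriv_cmul, mrswme_deriv_mulc]
      simp [mrswme_deriv_cmul, mrswme_deriv_mulc, hcan]
      all_goals first
      | ring1
      | linear_combination (-(b) - τ*η/3) * hε
      | linear_combination ((β - ε*η)/3) * hτ
      | linear_combination (-(τ*b) - η) * hε + (ε*β/3 - ε*ε*η/3) * hτ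
      | linear_combination (b + τ*η/3) * hε
      | linear_combination (-(β - ε*η)/3) * hτ
      | linear_combination ((τ*b) + η) * hε + (-(ε*β/3) + ε*ε*η/3) * hτ
    have r1 : (((v - ε * b + τ * (β - ε * η) / 3) • (1 : Matrix (Fin 9) (Fin 9) ℝ) -
        (mrswme1FluxJacobian g ![h, h * u, h * v, h * a, h * b, h * α, h * β, h * γ, h * η] - mrswme1GP u v a b α β γ η)).mulVec ![0,1,0,ε,0,τ,0,ε*τ,0]) (1:Fin 9) = 0 := by
      simp only [Matrix.mulVec, dotProduct, mrswme_sum9,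
        mrswme_v9_0, mrswme_v9_1, mrswme_v9_2, mrswme_v9_3, mrswme_v9_4,
        mrswme_v9_5, mrswme_v9_6, mrswme_v9_7, mrswme_v9_8,
        mul_zero, mul_one, add_zero, zero_add, one_mul,
        Matrix.sub_apply, Matrix.smul_apply, Matrix.one_apply, smul_eq_mul,
        mrswme1FluxJacobian, mrswme1GP, Matrix.of_apply,
        hupd1, hupd3, hupd5, hupd7, mrswme1Flux,
        deriv_add_const, deriv_const_add, deriv_sub_const, deriv_const_sub,
        deriv_div_const, deriv_mul_const_field, deriv_const_mul_field,
        deriv_id'', deriv_const', Pi.zero_apply, hcan,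
        mrswme_deriv_cmul, mrswme_deriv_mulc]
      simp [mrswme_deriv_cmul, mrswme_deriv_mulc, hcan]
      all_goals first
      | ring1
      | linear_combination (-(b) - τ*η/3) * hε
      | linear_combination ((β - ε*η)/3) * hτ
      | linear_combination (-(τ*b) - η) * hε + (ε*β/3 - ε*ε*η/3) * hτ
      | linear_combination (b + τ*η/3) * hε
      | linear_combination (-(β - ε*η)/3) * hτ
      | linear_combination ((τ*b) + η) * hε + (-(ε*β/3) + ε*ε*η/3) * hτ
    have r2 : (((v - ε * b + τ * (β - ε * η) / 3) • (1 : Matrix (Fin 9) (Fin 9) ℝ) -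
        (mrswme1FluxJacobian g ![h, h * u, h * v, h * a, h * b, h * α, h * β, h * γ, h * η] - mrswme1GP u v a b α β γ η)).mulVec ![0,1,0,ε,0,τ,0,ε*τ,0]) (2:Fin 9) = 0 := by
      simp only [Matrix.mulVec, dotProduct, mrswme_sum9,
        mrswme_v9_0, mrswme_v9_1, mrswme_v9_2, mrswme_v9_3, mrswme_v9_4,
        mrswme_v9_5, mrswme_v9_6, mrswme_v9_7, mrswme_v9_8,
        mul_zero, mul_one, add_zero, zero_add, one_mul,
        Matrix.sub_apply, Matrix.smul_apply, Matrix.one_apply, smul_eq_mul,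
        mrswme1FluxJacobian, mrswme1GP, Matrix.of_apply,
        hupd1, hupd3, hupd5, hupd7, mrswme1Flux,
        deriv_add_const, deriv_const_add, deriv_sub_const, deriv_const_sub,
        deriv_div_const, deriv_mul_const_field, deriv_const_mul_field,
        deriv_id'', deriv_const', Pi.zero_apply, hcan,
        mrswme_deriv_cmul, mrswme_deriv_mulc]
      simp [mrswme_deriv_cmul, mrswme_deriv_mulc, hcan]
      all_goals first
      | ring1
      | linear_combination (-(b) - τ*η/3) * hε
      | linear_combination ((β - ε*η)/3) * hτ
      | linear_combination (-(τ*b) - η) * hε + (ε*β/3 - ε*ε*η/3) * hτ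
      | linear_combination (b + τ*η/3) * hε
      | linear_combination (-(β - ε*η)/3) * hτ
      | linear_combination ((τ*b) + η) * hε + (-(ε*β/3) + ε*ε*η/3) * hτ
    have r3 : (((v - ε * b + τ * (β - ε * η) / 3) • (1 : Matrix (Fin 9) (Fin 9) ℝ) -
        (mrswme1FluxJacobian g ![h, h * u, h * v, h * a, h * b, h * α, h * β, h * γ, h * η] - mrswme1GP u v a b α β γ η)).mulVec ![0,1,0,ε,0,τ,0,ε*τ,0]) (3:Fin 9) = 0 := by
      simp only [Matrix.mulVec, dotProduct, mrswme_sum9,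
        mrswme_v9_0, mrswme_v9_1, mrswme_v9_2, mrswme_v9_3, mrswme_v9_4,
        mrswme_v9_5, mrswme_v9_6, mrswme_v9_7, mrswme_v9_8,
        mul_zero, mul_one, add_zero, zero_add, one_mul,
        Matrix.sub_apply, Matrix.smul_apply, Matrix.one_apply, smul_eq_mul,
        mrswme1FluxJacobian, mrswme1GP, Matrix.of_apply,
        hupd1, hupd3, hupd5, hupd7, mrswme1Flux,
        deriv_add_const, deriv_const_add, deriv_sub_const, deriv_const_sub,
        deriv_div_const, deriv_mul_const_field, deriv_const_mul_field,
        deriv_id'', deriv_const', Pi.zero_apply, hcan,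
        mrswme_deriv_cmul, mrswme_deriv_mulc]
      simp [mrswme_deriv_cmul, mrswme_deriv_mulc, hcan]
      all_goals first
      | ring1
      | linear_combination (-(b) - τ*η/3) * hε
      | linear_combination ((β - ε*η)/3) * hτ
      | linear_combination (-(τ*b) - η) * hε + (ε*β/3 - ε*ε*η/3) * hτ
      | linear_combination (b + τ*η/3) * hε
      | linear_combination (-(β - ε*η)/3) * hτ
      | linear_combination ((τ*b) + η) * hε + (-(ε*β/3) + ε*ε*η/3) * hτ
    have r4 : (((v - ε * b + τ * (β - ε * η) / 3) • (1 : Matrix (Fin 9) (Fin 9) ℝ) -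
        (mrswme1FluxJacobian g ![h, h * u, h * v, h * a, h * b, h * α, h * β, h * γ, h * η] - mrswme1GP u v a b α β γ η)).mulVec ![0,1,0,ε,0,τ,0,ε*τ,0]) (4:Fin 9) = 0 := by
      simp only [Matrix.mulVec, dotProduct, mrswme_sum9,
        mrswme_v9_0, mrswme_v9_1, mrswme_v9_2, mrswme_v9_3, mrswme_v9_4,
        mrswme_v9_5, mrswme_v9_6, mrswme_v9_7, mrswme_v9_8,
        mul_zero, mul_one, add_zero, zero_add, one_mul,
        Matrix.sub_apply, Matrix.smul_apply, Matrix.one_apply, smul_eq_mul,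
        mrswme1FluxJacobian, mrswme1GP, Matrix.of_apply,
        hupd1, hupd3, hupd5, hupd7, mrswme1Flux,
        deriv_add_const, deriv_const_add, deriv_sub_const, deriv_const_sub,
        deriv_div_const, deriv_mul_const_field, deriv_const_mul_field,
        deriv_id'', deriv_const', Pi.zero_apply, hcan,
        mrswme_deriv_cmul, mrswme_deriv_mulc]
      simp [mrswme_deriv_cmul, mrswme_deriv_mulc, hcan]
      all_goals first
      | ring1
      | linear_combination (-(b) - τ*η/3) * hε
      | linear_combination ((β - ε*η)/3) * hτ
      | linear_combination (-(τ*b) - η) * hε + (ε*β/3 - ε*ε*η/3) * hτ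
      | linear_combination (b + τ*η/3) * hε
      | linear_combination (-(β - ε*η)/3) * hτ
      | linear_combination ((τ*b) + η) * hε + (-(ε*β/3) + ε*ε*η/3) * hτ
    have r5 : (((v - ε * b + τ * (β - ε * η) / 3) • (1 : Matrix (Fin 9) (Fin 9) ℝ) -
        (mrswme1FluxJacobian g ![h, h * u, h * v, h * a, h * b, h * α, h * β, h * γ, h * η] - mrswme1GP u v a b α β γ η)).mulVec ![0,1,0,ε,0,τ,0,ε*τ,0]) (5:Fin 9) = 0 := by
      simp only [Matrix.mulVec, dotProduct, mrswme_sum9,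
        mrswme_v9_0, mrswme_v9_1, mrswme_v9_2, mrswme_v9_3, mrswme_v9_4,
        mrswme_v9_5, mrswme_v9_6, mrswme_v9_7, mrswme_v9_8,
        mul_zero, mul_one, add_zero, zero_add, one_mul,
        Matrix.sub_apply, Matrix.smul_apply, Matrix.one_apply, smul_eq_mul,
        mrswme1FluxJacobian, mrswme1GP, Matrix.of_apply,
        hupd1, hupd3, hupd5, hupd7, mrswme1Flux,
        deriv_add_const, deriv_const_add, deriv_sub_const, deriv_const_sub,
        deriv_div_const, deriv_mul_const_field, deriv_const_mul_field,
        deriv_id'', deriv_const', Pi.zero_apply, hcan,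
        mrswme_deriv_cmul, mrswme_deriv_mulc]
      simp [mrswme_deriv_cmul, mrswme_deriv_mulc, hcan]
      all_goals first
      | ring1
      | linear_combination (-(b) - τ*η/3) * hε
      | linear_combination ((β - ε*η)/3) * hτ
      | linear_combination (-(τ*b) - η) * hε + (ε*β/3 - ε*ε*η/3) * hτ
      | linear_combination (b + τ*η/3) * hε
      | linear_combination (-(β - ε*η)/3) * hτ
      | linear_combination ((τ*b) + η) * hε + (-(ε*β/3) + ε*ε*η/3) * hτ
    have r6 : (((v - ε * b + τ * (β - ε * η) / 3) • (1 : Matrix (Fin 9) (Fin 9) ℝ) -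
        (mrswme1FluxJacobian g ![h, h * u, h * v, h * a, h * b, h * α, h * β, h * γ, h * η] - mrswme1GP u v a b α β γ η)).mulVec ![0,1,0,ε,0,τ,0,ε*τ,0]) (6:Fin 9) = 0 := by
      simp only [Matrix.mulVec, dotProduct, mrswme_sum9,
        mrswme_v9_0, mrswme_v9_1, mrswme_v9_2, mrswme_v9_3, mrswme_v9_4,
        mrswme_v9_5, mrswme_v9_6, mrswme_v9_7, mrswme_v9_8,
        mul_zero, mul_one, add_zero, zero_add, one_mul,
        Matrix.sub_apply, Matrix.smul_apply, Matrix.one_apply, smul_eq_mul,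
        mrswme1FluxJacobian, mrswme1GP, Matrix.of_apply,
        hupd1, hupd3, hupd5, hupd7, mrswme1Flux,
        deriv_add_const, deriv_const_add, deriv_sub_const, deriv_const_sub,
        deriv_div_const, deriv_mul_const_field, deriv_const_mul_field,
        deriv_id'', deriv_const', Pi.zero_apply, hcan,
        mrswme_deriv_cmul, mrswme_deriv_mulc]
      simp [mrswme_deriv_cmul, mrswme_deriv_mulc, hcan]
      all_goals first
      | ring1
      | linear_combination (-(b) - τ*η/3) * hε
      | linear_combination ((β - ε*η)/3) * hτ
      | linear_combination (-(τ*b) - η) * hε + (ε*β/3 - ε*ε*η/3) * hτ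
      | linear_combination (b + τ*η/3) * hε
      | linear_combination (-(β - ε*η)/3) * hτ
      | linear_combination ((τ*b) + η) * hε + (-(ε*β/3) + ε*ε*η/3) * hτ
    have r7 : (((v - ε * b + τ * (β - ε * η) / 3) • (1 : Matrix (Fin 9) (Fin 9) ℝ) -
        (mrswme1FluxJacobian g ![h, h * u, h * v, h * a, h * b, h * α, h * β, h * γ, h * η] - mrswme1GP u v a b α β γ η)).mulVec ![0,1,0,ε,0,τ,0,ε*τ,0]) (7:Fin 9) = 0 := by
      simp only [Matrix.mulVec, dotProduct, mrswme_sum9,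
        mrswme_v9_0, mrswme_v9_1, mrswme_v9_2, mrswme_v9_3, mrswme_v9_4,
        mrswme_v9_5, mrswme_v9_6, mrswme_v9_7, mrswme_v9_8,
        mul_zero, mul_one, add_zero, zero_add, one_mul,
        Matrix.sub_apply, Matrix.smul_apply, Matrix.one_apply, smul_eq_mul,
        mrswme1FluxJacobian, mrswme1GP, Matrix.of_apply,
        hupd1, hupd3, hupd5, hupd7, mrswme1Flux,
        deriv_add_const, deriv_const_add, deriv_sub_const, deriv_const_sub,
        deriv_div_const, deriv_mul_const_field, deriv_const_mul_field,
        deriv_id'', deriv_const', Pi.zero_apply, hcan,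
        mrswme_deriv_cmul, mrswme_deriv_mulc]
      simp [mrswme_deriv_cmul, mrswme_deriv_mulc, hcan]
      all_goals first
      | ring1
      | linear_combination (-(b) - τ*η/3) * hε
      | linear_combination ((β - ε*η)/3) * hτ
      | linear_combination (-(τ*b) - η) * hε + (ε*β/3 - ε*ε*η/3) * hτ
      | linear_combination (b + τ*η/3) * hε
      | linear_combination (-(β - ε*η)/3) * hτ
      | linear_combination ((τ*b) + η) * hε + (-(ε*β/3) + ε*ε*η/3) * hτ
    have r8 : (((v - ε * b + τ * (β - ε * η) / 3) • (1 : Matrix (Fin 9) (Fin 9) ℝ) -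
        (mrswme1FluxJacobian g ![h, h * u, h * v, h * a, h * b, h * α, h * β, h * γ, h * η] - mrswme1GP u v a b α β γ η)).mulVec ![0,1,0,ε,0,τ,0,ε*τ,0]) (8:Fin 9) = 0 := by
      simp only [Matrix.mulVec, dotProduct, mrswme_sum9,
        mrswme_v9_0, mrswme_v9_1, mrswme_v9_2, mrswme_v9_3, mrswme_v9_4,
        mrswme_v9_5, mrswme_v9_6, mrswme_v9_7, mrswme_v9_8,
        mul_zero, mul_one, add_zero, zero_add, one_mul,
        Matrix.sub_apply, Matrix.smul_apply, Matrix.one_apply, smul_eq_mul,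
        mrswme1FluxJacobian, mrswme1GP, Matrix.of_apply,
        hupd1, hupd3, hupd5, hupd7, mrswme1Flux,
        deriv_add_const, deriv_const_add, deriv_sub_const, deriv_const_sub,
        deriv_div_const, deriv_mul_const_field, deriv_const_mul_field,
        deriv_id'', deriv_const', Pi.zero_apply, hcan,
        mrswme_deriv_cmul, mrswme_deriv_mulc]
      simp [mrswme_deriv_cmul, mrswme_deriv_mulc, hcan]
      all_goals first
      | ring1
      | linear_combination (-(b) - τ*η/3) * hε
      | linear_combination ((β - ε*η)/3) * hτ
      | linear_combination (-(τ*b) - η) * hε + (ε*β/3 - ε*ε*η/3) * hτ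
      | linear_combination (b + τ*η/3) * hε
      | linear_combination (-(β - ε*η)/3) * hτ
      | linear_combination ((τ*b) + η) * hε + (-(ε*β/3) + ε*ε*η/3) * hτ
    funext i
    fin_cases i
    exacts [r0, r1, r2, r3, r4, r5, r6, r7, r8]

/-- For the first-order (M = 1) 1-D MRSW moment system with
Godunov–Powell source, the quasilinear matrix `J(U) = DG(U) − Q(U)` at the
state `U = (h, hu, hv, ha, hb, hα, hβ, hγ, hη)` admits the five closed-form
real eigenvalues `v − β`, `v − b ± (β−η)/√3`, `v + b ± (β+η)/√3`. -/
theorem mrswme1_closed_form_eigenvalues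
    (g : ℝ) (hg : 0 < g) (h u v a b α β γ η : ℝ) (hh : 0 < h) :
    (Matrix.charpoly
        (mrswme1FluxJacobian g
            ![h, h * u, h * v, h * a, h * b, h * α, h * β, h * γ, h * η]
          - mrswme1GP u v a b α β γ η)).IsRoot (v - β)
    ∧
    (Matrix.charpoly
        (mrswme1FluxJacobian g
            ![h, h * u, h * v, h * a, h * b, h * α, h * β, h * γ, h * η]
          - mrswme1GP u v a b α β γ η)).IsRoot
      (v - b + (β - η) / Real.sqrt 3)
    ∧
    (Matrix.charpoly
        (mrswme1FluxJacobian g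
            ![h, h * u, h * v, h * a, h * b, h * α, h * β, h * γ, h * η]
          - mrswme1GP u v a b α β γ η)).IsRoot
      (v - b - (β - η) / Real.sqrt 3)
    ∧
    (Matrix.charpoly
        (mrswme1FluxJacobian g
            ![h, h * u, h * v, h * a, h * b, h * α, h * β, h * γ, h * η]
          - mrswme1GP u v a b α β γ η)).IsRoot
      (v + b + (β + η) / Real.sqrt 3)
    ∧
    (Matrix.charpoly
        (mrswme1FluxJacobian g
            ![h, h * u, h * v, h * a, h * b, h * α, h * β, h * γ, h * η]
          - mrswme1GP u v a b α β γ η)).IsRoot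
      (v + b - (β + η) / Real.sqrt 3) := by
  have hh' : h ≠ 0 := ne_of_gt hh
  have hs : Real.sqrt 3 * Real.sqrt 3 = 3 := Real.mul_self_sqrt (by norm_num)
  have hs0 : Real.sqrt 3 ≠ 0 := by positivity
  have hq : ∀ x : ℝ, x / Real.sqrt 3 = Real.sqrt 3 * x / 3 := by
    intro x
    rw [div_eq_div_iff hs0 (by norm_num : (3:ℝ) ≠ 0)]
    linear_combination (-x) * hs
  refine ⟨mrswme1_root_first g h u v a b α β γ η hh', ?_, ?_, ?_, ?_⟩
  · have := mrswme1_root_aux g h u v a b α β γ η 1 (Real.sqrt 3) hh' (by norm_num) hs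
    have e : v - b + (β - η) / Real.sqrt 3 = v - 1 * b + Real.sqrt 3 * (β - 1 * η) / 3 := by rw [hq]; ring
    rw [e]; exact this
  · have := mrswme1_root_aux g h u v a b α β γ η 1 (-Real.sqrt 3) hh' (by norm_num)
      (by linear_combination hs)
    have e : v - b - (β - η) / Real.sqrt 3 = v - 1 * b + -Real.sqrt 3 * (β - 1 * η) / 3 := by rw [hq]; ring
    rw [e]; exact this
  · have := mrswme1_root_aux g h u v a b α β γ η (-1) (Real.sqrt 3) hh' (by norm_num) hs
    have e : v + b + (β + η) / Real.sqrt 3 = v - (-1) * b + Real.sqrt 3 * (β - (-1) * η) / 3 := by rw [hq]; ring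
    rw [e]; exact this
  · have := mrswme1_root_aux g h u v a b α β γ η (-1) (-Real.sqrt 3) hh' (by norm_num)
      (by linear_combination hs)
    have e : v + b - (β + η) / Real.sqrt 3 = v - (-1) * b + -Real.sqrt 3 * (β - (-1) * η) / 3 := by rw [hq]; ring
    rw [e]; exact this
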